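/- Fix real parameters ω, ρ, λ and let ψ : (0,∞) → ℝ be twice differentiable. Define φ : (0,∞) → ℝ by φ(q) = (2q)^{1/4} · ψ((2q)^{1/2}). Then ψ satisfies the translated harmonic oscillator equation −ψ''(z) + (ω²z² + ρz + λ)ψ(z) = 0 for all z > 0 if and only if φ satisfies the Schrödinger equation −φ''(q) + (V(q) + ω²)φ(q) = 0 for all q > 0, where V(q) = ρ(2q)^{−1/2} + λ/(2q) − 3/(16q²). -/

import Mathlib

lemma quarter_pow (x : ℝ) (hx : 0 < x) (n : ℕ) :
    x ^ ((n : ℝ)/4) = (x ^ ((1:ℝ)/4))^n := by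
  rw [← Real.rpow_natCast (x ^ ((1:ℝ)/4)) n, ← Real.rpow_mul hx.le]
  ring_nf

lemma quarter_pow_neg (x : ℝ) (hx : 0 < x) (n : ℕ) :
    x ^ (-((n : ℝ)/4)) = ((x ^ ((1:ℝ)/4))^n)⁻¹ := by
  rw [Real.rpow_neg hx.le, quarter_pow x hx n]

lemma first_deriv (ψ : ℝ → ℝ)
    (hψ : ∀ z > (0 : ℝ), DifferentiableAt ℝ ψ z)
    (φ : ℝ → ℝ)
    (hφ : ∀ q > (0 : ℝ), φ q = (2 * q) ^ ((1 : ℝ) / 4) * ψ ((2 * q) ^ ((1 : ℝ) / 2)))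
    (x : ℝ) (hx : 0 < x) :
    HasDerivAt φ ((1/2) * ((2*x) ^ (-((3:ℝ)/4))) * ψ ((2*x) ^ ((1:ℝ)/2))
      + (2*x) ^ (-((1:ℝ)/4)) * deriv ψ ((2*x) ^ ((1:ℝ)/2))) x := by
  have h2x : 0 < 2*x := by linarith
  have hux : 0 < (2*x) ^ ((1:ℝ)/2) := Real.rpow_pos_of_pos h2x _
  have ht : 0 < (2*x) ^ ((1:ℝ)/4) := Real.rpow_pos_of_pos h2x _
  have hlin : HasDerivAt (fun y : ℝ => 2*y) 2 x := by
    simpa using (hasDerivAt_id x).const_mul 2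
  have hu : HasDerivAt (fun y : ℝ => (2*y) ^ ((1:ℝ)/2))
      ((1/2) * (2*x) ^ ((1:ℝ)/2 - 1) * 2) x :=
    (Real.hasDerivAt_rpow_const (Or.inl h2x.ne')).comp x hlin
  have ha : HasDerivAt (fun y : ℝ => (2*y) ^ ((1:ℝ)/4))
      ((1/4) * (2*x) ^ ((1:ℝ)/4 - 1) * 2) x :=
    (Real.hasDerivAt_rpow_const (Or.inl h2x.ne')).comp x hlin
  have hψx : HasDerivAt ψ (deriv ψ ((2*x) ^ ((1:ℝ)/2))) ((2*x) ^ ((1:ℝ)/2)) :=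
    (hψ _ hux).hasDerivAt
  have hF := ha.mul (hψx.comp x hu)
  have heq : φ =ᶠ[nhds x] fun y => (2*y) ^ ((1:ℝ)/4) * ψ ((2*y) ^ ((1:ℝ)/2)) :=
    Filter.eventuallyEq_of_mem (Ioi_mem_nhds hx) (fun y hy => hφ y hy)
  have hFφ := hF.congr_of_eventuallyEq heq
  refine hFφ.congr_deriv ?_
  symm
  have e1 : (2*x) ^ ((1:ℝ)/4 - 1) = (((2*x) ^ ((1:ℝ)/4))^3)⁻¹ := by
    rw [show (1:ℝ)/4 - 1 = -((3:ℕ)/4 : ℝ) by norm_num, quarter_pow_neg _ h2x]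
  have e2 : (2*x) ^ ((1:ℝ)/2 - 1) = (((2*x) ^ ((1:ℝ)/4))^2)⁻¹ := by
    rw [show (1:ℝ)/2 - 1 = -((2:ℕ)/4 : ℝ) by norm_num, quarter_pow_neg _ h2x]
  have e3 : (2*x) ^ (-((3:ℝ)/4)) = (((2*x) ^ ((1:ℝ)/4))^3)⁻¹ := by
    simpa using quarter_pow_neg _ h2x 3
  have e4 : (2*x) ^ (-((1:ℝ)/4)) = (((2*x) ^ ((1:ℝ)/4))^1)⁻¹ := by
    simpa using quarter_pow_neg _ h2x 1
  rw [e1, e2, e3, e4, Function.comp_apply]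
  field_simp
  ring

lemma second_deriv (ψ : ℝ → ℝ)
    (hψ : ∀ z > (0 : ℝ), DifferentiableAt ℝ ψ z)
    (hψ' : ∀ z > (0 : ℝ), DifferentiableAt ℝ (deriv ψ) z)
    (φ : ℝ → ℝ)
    (hφ : ∀ q > (0 : ℝ), φ q = (2 * q) ^ ((1 : ℝ) / 4) * ψ ((2 * q) ^ ((1 : ℝ) / 2)))
    (q : ℝ) (hq : 0 < q) :
    deriv (deriv φ) q = -(3/4) * (((2*q) ^ ((1:ℝ)/4))^7)⁻¹ * ψ ((2*q) ^ ((1:ℝ)/2))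
      + (((2*q) ^ ((1:ℝ)/4))^3)⁻¹ * deriv (deriv ψ) ((2*q) ^ ((1:ℝ)/2)) := by
  have h2q : 0 < 2*q := by linarith
  have huq : 0 < (2*q) ^ ((1:ℝ)/2) := Real.rpow_pos_of_pos h2q _
  have ht : 0 < (2*q) ^ ((1:ℝ)/4) := Real.rpow_pos_of_pos h2q _
  -- deriv φ agrees with G near q
  have hev : deriv φ =ᶠ[nhds q] fun y =>
      (1/2) * ((2*y) ^ (-((3:ℝ)/4)) * ψ ((2*y) ^ ((1:ℝ)/2)))
        + (2*y) ^ (-((1:ℝ)/4)) * deriv ψ ((2*y) ^ ((1:ℝ)/2)) :=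
    Filter.eventuallyEq_of_mem (Ioi_mem_nhds hq)
      (fun y hy => by rw [(first_deriv ψ hψ φ hφ y hy).deriv]; ring)
  rw [Filter.EventuallyEq.deriv_eq hev]
  -- now differentiate G at q
  have hlin : HasDerivAt (fun y : ℝ => 2*y) 2 q := by
    simpa using (hasDerivAt_id q).const_mul 2
  have hu : HasDerivAt (fun y : ℝ => (2*y) ^ ((1:ℝ)/2))
      ((1/2) * (2*q) ^ ((1:ℝ)/2 - 1) * 2) q :=
    (Real.hasDerivAt_rpow_const (Or.inl h2q.ne')).comp q hlin
  have ha : HasDerivAt (fun y : ℝ => (2*y) ^ (-((3:ℝ)/4)))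
      ((-((3:ℝ)/4)) * (2*q) ^ (-((3:ℝ)/4) - 1) * 2) q :=
    (Real.hasDerivAt_rpow_const (Or.inl h2q.ne')).comp q hlin
  have hb : HasDerivAt (fun y : ℝ => (2*y) ^ (-((1:ℝ)/4)))
      ((-((1:ℝ)/4)) * (2*q) ^ (-((1:ℝ)/4) - 1) * 2) q :=
    (Real.hasDerivAt_rpow_const (Or.inl h2q.ne')).comp q hlin
  have hψq : HasDerivAt ψ (deriv ψ ((2*q) ^ ((1:ℝ)/2))) ((2*q) ^ ((1:ℝ)/2)) :=
    (hψ _ huq).hasDerivAt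
  have hψ'q : HasDerivAt (deriv ψ) (deriv (deriv ψ) ((2*q) ^ ((1:ℝ)/2)))
      ((2*q) ^ ((1:ℝ)/2)) := (hψ' _ huq).hasDerivAt
  have hG : HasDerivAt (fun y =>
      (1/2) * ((2*y) ^ (-((3:ℝ)/4)) * ψ ((2*y) ^ ((1:ℝ)/2)))
        + (2*y) ^ (-((1:ℝ)/4)) * deriv ψ ((2*y) ^ ((1:ℝ)/2)))
      ((1/2) * ((-((3:ℝ)/4)) * (2*q) ^ (-((3:ℝ)/4) - 1) * 2 * ψ ((2*q) ^ ((1:ℝ)/2))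
          + (2*q) ^ (-((3:ℝ)/4)) * (deriv ψ ((2*q) ^ ((1:ℝ)/2)) * ((1/2) * (2*q) ^ ((1:ℝ)/2 - 1) * 2)))
        + ((-((1:ℝ)/4)) * (2*q) ^ (-((1:ℝ)/4) - 1) * 2 * deriv ψ ((2*q) ^ ((1:ℝ)/2))
          + (2*q) ^ (-((1:ℝ)/4)) * (deriv (deriv ψ) ((2*q) ^ ((1:ℝ)/2)) * ((1/2) * (2*q) ^ ((1:ℝ)/2 - 1) * 2)))) q :=
    ((ha.mul (hψq.comp q hu)).const_mul (1/2 : ℝ)).add (hb.mul (hψ'q.comp q hu : HasDerivAt (deriv ψ ∘ fun y : ℝ => (2*y) ^ ((1:ℝ)/2)) _ q))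
  rw [hG.deriv]
  have e2 : (2*q) ^ ((1:ℝ)/2 - 1) = (((2*q) ^ ((1:ℝ)/4))^2)⁻¹ := by
    rw [show (1:ℝ)/2 - 1 = -((2:ℕ)/4 : ℝ) by norm_num, quarter_pow_neg _ h2q]
  have e3 : (2*q) ^ (-((3:ℝ)/4)) = (((2*q) ^ ((1:ℝ)/4))^3)⁻¹ := by
    simpa using quarter_pow_neg _ h2q 3
  have e5 : (2*q) ^ (-((3:ℝ)/4) - 1) = (((2*q) ^ ((1:ℝ)/4))^7)⁻¹ := by
    rw [show -((3:ℝ)/4) - 1 = -((7:ℕ)/4 : ℝ) by norm_num, quarter_pow_neg _ h2q]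
  have e6 : (2*q) ^ (-((1:ℝ)/4) - 1) = (((2*q) ^ ((1:ℝ)/4))^5)⁻¹ := by
    rw [show -((1:ℝ)/4) - 1 = -((5:ℕ)/4 : ℝ) by norm_num, quarter_pow_neg _ h2q]
  have e4 : (2*q) ^ (-((1:ℝ)/4)) = (((2*q) ^ ((1:ℝ)/4))^1)⁻¹ := by
    simpa using quarter_pow_neg _ h2q 1

  rw [e2, e3, e4, e5, e6]
  field_simp
  ring

lemma main_identity (ω ρ lam : ℝ) (ψ : ℝ → ℝ)
    (hψ : ∀ z > (0 : ℝ), DifferentiableAt ℝ ψ z)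
    (hψ' : ∀ z > (0 : ℝ), DifferentiableAt ℝ (deriv ψ) z)
    (φ : ℝ → ℝ)
    (hφ : ∀ q > (0 : ℝ), φ q = (2 * q) ^ ((1 : ℝ) / 4) * ψ ((2 * q) ^ ((1 : ℝ) / 2)))
    (q : ℝ) (hq : 0 < q) :
    -(deriv (deriv φ) q) +
      ((ρ * (2 * q) ^ (-(1 / 2) : ℝ) + lam / (2 * q) - 3 / (16 * q ^ 2)) + ω ^ 2) * φ q
    = (((2*q) ^ ((1:ℝ)/4))^3)⁻¹ *
      (-(deriv (deriv ψ) ((2*q) ^ ((1:ℝ)/2)))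
        + (ω ^ 2 * ((2*q) ^ ((1:ℝ)/2)) ^ 2 + ρ * (2*q) ^ ((1:ℝ)/2) + lam)
          * ψ ((2*q) ^ ((1:ℝ)/2))) := by
  have h2q : 0 < 2*q := by linarith
  have ht : 0 < (2*q) ^ ((1:ℝ)/4) := Real.rpow_pos_of_pos h2q _
  rw [second_deriv ψ hψ hψ' φ hφ q hq, hφ q hq]
  have e1 : (2*q) ^ (-(1/2) : ℝ) = (((2*q) ^ ((1:ℝ)/4))^2)⁻¹ := by
    rw [show (-(1/2) : ℝ) = -(((2:ℕ):ℝ)/4) by norm_num, quarter_pow_neg _ h2q]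
  have e2 : (2*q) ^ ((1:ℝ)/2) = ((2*q) ^ ((1:ℝ)/4))^2 := by
    rw [show ((1:ℝ)/2) = (((2:ℕ):ℝ)/4) by norm_num, quarter_pow _ h2q]
  have e3 : 2*q = ((2*q) ^ ((1:ℝ)/4))^4 := by
    rw [show ((2*q) ^ ((1:ℝ)/4))^4 = (2*q) ^ (((4:ℕ):ℝ)/4) from (quarter_pow _ h2q 4).symm]
    norm_num
  have e4 : 16*q^2 = 4*(((2*q) ^ ((1:ℝ)/4))^4)^2 := by
    rw [← e3]; ring
  have e5 : q^2 = (((2*q) ^ ((1:ℝ)/4))^4)^2/4 := by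
    rw [← e3]; ring
  rw [e1, e2, e5, show lam/(2*q) = lam/(((2*q) ^ ((1:ℝ)/4))^4) by rw [← e3]]
  field_simp
  ring

/-- The Schrödinger equation with the potential
`V q = ρ (2q)^{−1/2} + λ/(2q) − 3/(16 q²)` (energy shifted by `ω²`) is equivalent, under the
substitution `φ q = (2q)^{1/4} ψ((2q)^{1/2})`, to the translated harmonic oscillator equation
`−ψ'' + (ω² z² + ρ z + λ) ψ = 0`. -/
theorem coulomb_like_reduces_to_translated_harmonic_oscillator
    (ω ρ lam : ℝ) (ψ : ℝ → ℝ)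
    -- `ψ` is twice differentiable on `(0, ∞)`
    (hψ : ∀ z > (0 : ℝ), DifferentiableAt ℝ ψ z)
    (hψ' : ∀ z > (0 : ℝ), DifferentiableAt ℝ (deriv ψ) z)
    (φ : ℝ → ℝ)
    -- `φ q = (2q)^{1/4} · ψ((2q)^{1/2})` on `(0, ∞)`
    (hφ : ∀ q > (0 : ℝ), φ q = (2 * q) ^ ((1 : ℝ) / 4) * ψ ((2 * q) ^ ((1 : ℝ) / 2))) :
    -- translated harmonic oscillator equation for `ψ` …
    (∀ z > (0 : ℝ), -(deriv (deriv ψ) z) + (ω ^ 2 * z ^ 2 + ρ * z + lam) * ψ z = 0) ↔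
    -- … iff Schrödinger equation with potential `V` and energy shift `ω²` for `φ`
    (∀ q > (0 : ℝ), -(deriv (deriv φ) q) +
      ((ρ * (2 * q) ^ (-(1 / 2) : ℝ) + lam / (2 * q) - 3 / (16 * q ^ 2)) + ω ^ 2) * φ q
        = 0) := by
  constructor
  · intro h q hq
    have h2q : 0 < 2*q := by linarith
    have hz : 0 < (2*q) ^ ((1:ℝ)/2) := Real.rpow_pos_of_pos h2q _
    rw [main_identity ω ρ lam ψ hψ hψ' φ hφ q hq, h _ hz, mul_zero]
  · intro h z hz
    have hq : 0 < z^2/2 := by positivity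
    have h2 : 2*(z^2/2) = z^2 := by ring
    have hz2 : (2*(z^2/2)) ^ ((1:ℝ)/2) = z := by
      rw [h2, ← Real.rpow_natCast z 2, ← Real.rpow_mul hz.le]
      norm_num
    have ht : 0 < (2*(z^2/2)) ^ ((1:ℝ)/4) := Real.rpow_pos_of_pos (by positivity) _
    have hmain := (main_identity ω ρ lam ψ hψ hψ' φ hφ (z^2/2) hq).symm.trans
      (h (z^2/2) hq)
    rw [hz2] at hmain
    rcases mul_eq_zero.mp hmain with h0 | h0
    · exact absurd h0 (inv_ne_zero (pow_ne_zero _ ht.ne'))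
    · exact h0
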